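/- Let 𝔐 = (V,⟨·,·⟩,A) be Jacobi–Tsankov. Then the polarized Jacobi operators commute pairwise: J(x₁,x₂)∘J(y₁,y₂) = J(y₁,y₂)∘J(x₁,x₂) for all x₁, x₂, y₁, y₂ ∈ V. -/
import Mathlib


noncomputable section

/-- The Jacobi operator `J(x) : y ↦ 𝒜(y,x)x` of a (tri)linear curvature operator `𝒜`. -/
def jacobiOp {V : Type*} [AddCommGroup V] [Module ℝ V]
    (Aop : V →ₗ[ℝ] V →ₗ[ℝ] V →ₗ[ℝ] V) (x : V) : V →ₗ[ℝ] V where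
  toFun y := Aop y x x
  map_add' y z := by simp
  map_smul' c y := by simp

/-- The polarized Jacobi operator `J(x,y) : z ↦ ½(𝒜(z,x)y + 𝒜(z,y)x)`. -/
def jacobiPol {V : Type*} [AddCommGroup V] [Module ℝ V]
    (Aop : V →ₗ[ℝ] V →ₗ[ℝ] V →ₗ[ℝ] V) (x y : V) : V →ₗ[ℝ] V where
  toFun z := (1/2 : ℝ) • (Aop z x y + Aop z y x)
  map_add' a b := by simp [smul_add]; abel
  map_smul' c a := by simp [smul_add, smul_comm c]

/-- If `𝔐 = (V,⟨·,·⟩,A)` is Jacobi–Tsankov, then the polarized Jacobi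
operators commute pairwise. -/
theorem jacobiTsankov_polarized_commute
    {V : Type*} [AddCommGroup V] [Module ℝ V] [FiniteDimensional ℝ V]
    -- a nondegenerate symmetric bilinear form ⟨·,·⟩ on V
    (B : LinearMap.BilinForm ℝ V)
    (hBsymm : ∀ x y : V, B x y = B y x)
    (hBnd : ∀ x : V, (∀ y : V, B x y = 0) → x = 0)
    -- the curvature operator 𝒜, with `A x y z w = ⟨𝒜(x,y)z, w⟩`
    (Aop : V →ₗ[ℝ] V →ₗ[ℝ] V →ₗ[ℝ] V)
    -- A(x,y,z,w) = -A(y,x,z,w)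
    (hA1 : ∀ x y z w : V, B (Aop x y z) w = - B (Aop y x z) w)
    -- A(x,y,z,w) = A(z,w,x,y)
    (hA2 : ∀ x y z w : V, B (Aop x y z) w = B (Aop z w x) y)
    -- first Bianchi identity
    (hA3 : ∀ x y z w : V, B (Aop x y z) w + B (Aop y z x) w + B (Aop z x y) w = 0)
    -- 𝔐 is Jacobi–Tsankov
    (hJT : ∀ x y : V, jacobiOp Aop x ∘ₗ jacobiOp Aop y = jacobiOp Aop y ∘ₗ jacobiOp Aop x) :
    ∀ x₁ x₂ y₁ y₂ : V,
      jacobiPol Aop x₁ x₂ ∘ₗ jacobiPol Aop y₁ y₂ = jacobiPol Aop y₁ y₂ ∘ₗ jacobiPol Aop x₁ x₂ := by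
  have pol_eq : ∀ a b : V, jacobiPol Aop a b
      = (1/2 : ℝ) • (jacobiOp Aop (a + b) - jacobiOp Aop a - jacobiOp Aop b) := by
    intro a b
    ext z
    simp only [jacobiPol, jacobiOp, LinearMap.coe_mk, AddHom.coe_mk, LinearMap.smul_apply,
      LinearMap.sub_apply, map_add, LinearMap.add_apply]
    congr 1
    abel
  have key : ∀ a b : V, Commute (jacobiOp Aop a) (jacobiOp Aop b) := fun a b => hJT a b
  intro x₁ x₂ y₁ y₂
  have cf : ∀ u : V,
      Commute (jacobiOp Aop (x₁ + x₂) - jacobiOp Aop x₁ - jacobiOp Aop x₂) (jacobiOp Aop u) :=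
    fun u => ((key _ _).sub_left (key _ _)).sub_left (key _ _)
  have hc := ((cf (y₁ + y₂)).sub_right (cf y₁)).sub_right (cf y₂)
  rw [pol_eq, pol_eq]
  simp only [← Module.End.mul_eq_comp, smul_mul_assoc, mul_smul_comm, hc.eq]
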